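/- Let M be a positive semidefinite p×p real matrix. For a positive integer k, define the maximal k-sparse eigenvalue φ_M(k) = max{ α'Mα : α ∈ ℝ^p, ‖α‖₀ ≤ k, ‖α‖₂ = 1 }. Then for any integer k ≥ 1 and real ℓ ≥ 1, φ_M(⌈ℓk⌉) ≤ ⌈ℓ⌉ · φ_M(k). -/

import Mathlib

open Matrix

private lemma aux_quad_nonneg {p : ℕ} {M : Matrix (Fin p) (Fin p) ℝ} (hM : M.PosSemidef)
    (x : Fin p → ℝ) : 0 ≤ x ⬝ᵥ M.mulVec x := by
  simpa using hM.dotProduct_mulVec_nonneg x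

private lemma aux_transpose {p : ℕ} {M : Matrix (Fin p) (Fin p) ℝ} (hM : M.PosSemidef) :
    Mᵀ = M := by
  ext i j
  have := congrFun (congrFun hM.1 i) j
  simpa using this

private lemma aux_twoB {p : ℕ} {M : Matrix (Fin p) (Fin p) ℝ} (hM : M.PosSemidef)
    (x y : Fin p → ℝ) :
    2 * (x ⬝ᵥ M.mulVec y) ≤ x ⬝ᵥ M.mulVec x + y ⬝ᵥ M.mulVec y := by
  have h0 : (0:ℝ) ≤ (x - y) ⬝ᵥ M.mulVec (x - y) := by simpa using hM.dotProduct_mulVec_nonneg (x - y)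
  have hsymm : y ⬝ᵥ M.mulVec x = x ⬝ᵥ M.mulVec y := by
    rw [Matrix.dotProduct_mulVec, dotProduct_comm, ← Matrix.mulVec_transpose,
      aux_transpose hM]
  rw [Matrix.mulVec_sub, sub_dotProduct, dotProduct_sub,
    dotProduct_sub] at h0
  linarith [h0, hsymm]

private lemma aux_bdd {p : ℕ} (M : Matrix (Fin p) (Fin p) ℝ) (m : ℕ) :
    BddAbove {x : ℝ | ∃ α : Fin p → ℝ,
      (Finset.univ.filter (fun j => α j ≠ 0)).card ≤ m ∧
      (∑ j, (α j) ^ 2) = 1 ∧ x = α ⬝ᵥ M.mulVec α} := by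
  refine ⟨∑ i, ∑ j, |M i j|, ?_⟩
  rintro x ⟨α, hcard, hnorm, rfl⟩
  have habs : ∀ i, |α i| ≤ 1 := by
    intro i
    have h1 : (α i)^2 ≤ 1 := by
      rw [← hnorm]
      exact Finset.single_le_sum (fun j _ => sq_nonneg (α j)) (Finset.mem_univ i)
    nlinarith [abs_nonneg (α i), sq_abs (α i)]
  have hexp : α ⬝ᵥ M.mulVec α = ∑ i, ∑ j, α i * (M i j * α j) := by
    simp [dotProduct, Matrix.mulVec, Finset.mul_sum]
  calc α ⬝ᵥ M.mulVec α ≤ |α ⬝ᵥ M.mulVec α| := le_abs_self _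
    _ ≤ ∑ i, ∑ j, |M i j| := by
      rw [hexp]
      refine le_trans (Finset.abs_sum_le_sum_abs _ _) (Finset.sum_le_sum fun i _ => ?_)
      refine le_trans (Finset.abs_sum_le_sum_abs _ _) (Finset.sum_le_sum fun j _ => ?_)
      calc |α i * (M i j * α j)| = |α i| * |M i j| * |α j| := by
            rw [abs_mul, abs_mul]; ring
        _ ≤ 1 * |M i j| * 1 := by
            have h1 := mul_le_mul_of_nonneg_right
              (mul_le_mul_of_nonneg_right (habs i) (abs_nonneg (M i j))) (abs_nonneg (α j))
            have h2 := mul_le_mul_of_nonneg_left (habs j)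
              (by positivity : (0:ℝ) ≤ 1 * |M i j|)
            linarith
        _ = |M i j| := by ring

private lemma aux_partition {p : ℕ} (s : Finset (Fin p)) (m k : ℕ) (hk : 0 < k)
    (hcard : s.card ≤ m * k) :
    ∃ f : Fin p → ℕ, (∀ j ∈ s, f j < m) ∧
      ∀ t, (s.filter (fun j => f j = t)).card ≤ k := by
  classical
  let e := s.equivFin
  refine ⟨fun j => if h : j ∈ s then (e ⟨j, h⟩ : ℕ) / k else 0, ?_, ?_⟩
  · intro j hj
    simp only [dif_pos hj]
    have h1 : (e ⟨j, hj⟩ : ℕ) < s.card := (e ⟨j, hj⟩).2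
    have h2 : (e ⟨j, hj⟩ : ℕ) < m * k := lt_of_lt_of_le h1 hcard
    have h2' : (e ⟨j, hj⟩ : ℕ) < k * m := by rwa [mul_comm] at h2
    exact Nat.div_lt_of_lt_mul h2'
  · intro t
    have hsub : (s.filter (fun j => (if h : j ∈ s then (e ⟨j, h⟩ : ℕ) / k else 0) = t)).card
        ≤ (Finset.Ico (t*k) (t*k+k)).card := by
      apply Finset.card_le_card_of_injOn (fun j => if h : j ∈ s then (e ⟨j, h⟩ : ℕ) else 0)
      · intro j hj
        simp only [Finset.mem_coe, Finset.mem_filter] at hj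
        obtain ⟨hjs, hjt⟩ := hj
        simp only [dif_pos hjs, Finset.mem_coe] at hjt ⊢
        rw [Finset.mem_Ico]
        have h3 := Nat.div_add_mod (e ⟨j, hjs⟩ : ℕ) k
        have h4 := Nat.mod_lt (e ⟨j, hjs⟩ : ℕ) hk
        subst hjt
        refine ⟨Nat.div_mul_le_self _ _, ?_⟩
        calc (e ⟨j, hjs⟩ : ℕ) = k * ((e ⟨j, hjs⟩ : ℕ)/k) + (e ⟨j, hjs⟩ : ℕ) % k := h3.symm
          _ < k * ((e ⟨j, hjs⟩ : ℕ)/k) + k := by omega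
          _ = (e ⟨j, hjs⟩ : ℕ)/k * k + k := by ring
      · intro j1 hj1 j2 hj2 heq
        simp only [Finset.coe_filter, Set.mem_setOf_eq] at hj1 hj2
        simp only [dif_pos hj1.1, dif_pos hj2.1] at heq
        have := e.injective (Fin.ext heq)
        exact congrArg Subtype.val this
    simpa using hsub

/-- Sub-linearity of maximal sparse eigenvalues: for a positive semidefinite `p × p`
matrix `M`, the maximal `k`-sparse eigenvalue
`φ_M(k) = sup { α'Mα : ‖α‖₀ ≤ k, ‖α‖₂ = 1 }` satisfies
`φ_M(⌈ℓk⌉) ≤ ⌈ℓ⌉ · φ_M(k)` for any integer `k ≥ 1` and real `ℓ ≥ 1`. -/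
theorem sparse_eigenvalue_sublinear
    (p : ℕ) (M : Matrix (Fin p) (Fin p) ℝ) (hM : M.PosSemidef)
    (φ : ℕ → ℝ)
    (hφ : ∀ k : ℕ, φ k = sSup {x : ℝ | ∃ α : Fin p → ℝ,
      (Finset.univ.filter (fun j => α j ≠ 0)).card ≤ k ∧
      (∑ j, (α j) ^ 2) = 1 ∧ x = α ⬝ᵥ M.mulVec α})
    (k : ℕ) (hk : 1 ≤ k) (ℓ : ℝ) (hℓ : 1 ≤ ℓ) :
    φ ⌈ℓ * k⌉₊ ≤ (⌈ℓ⌉₊ : ℝ) * φ k := by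
  classical
  set S : ℕ → Set ℝ := fun n => {x : ℝ | ∃ α : Fin p → ℝ,
      (Finset.univ.filter (fun j => α j ≠ 0)).card ≤ n ∧
      (∑ j, (α j) ^ 2) = 1 ∧ x = α ⬝ᵥ M.mulVec α} with hS
  set m : ℕ := ⌈ℓ⌉₊ with hmdef
  have hm1 : 1 ≤ m := by
    rw [hmdef]
    exact Nat.one_le_ceil_iff.mpr (by linarith)
  by_cases hp : p = 0
  · subst hp
    have hzero : ∀ n : ℕ, φ n = 0 := by
      intro n
      rw [hφ n]
      have hempty : {x : ℝ | ∃ α : Fin 0 → ℝ,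
          (Finset.univ.filter (fun j => α j ≠ 0)).card ≤ n ∧
          (∑ j, (α j) ^ 2) = 1 ∧ x = α ⬝ᵥ M.mulVec α} = (∅ : Set ℝ) := by
        ext x
        simp only [Set.mem_setOf_eq, Set.mem_empty_iff_false, iff_false]
        rintro ⟨α, _, h2, _⟩
        simp at h2
      rw [hempty, Real.sSup_empty]
    rw [hzero, hzero]
    simp
  · have hppos : 0 < p := Nat.pos_of_ne_zero hp
    set i0 : Fin p := ⟨0, hppos⟩
    -- φ k is nonnegative
    have hφk0 : 0 ≤ φ k := by
      set γ : Fin p → ℝ := Pi.single i0 1 with hγ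
      have hmem : γ ⬝ᵥ M.mulVec γ ∈ S k := by
        refine ⟨γ, ?_, ?_, rfl⟩
        · have hsub : (Finset.univ.filter (fun j => γ j ≠ 0)) ⊆ {i0} := by
            intro j hj
            simp only [Finset.mem_filter, Finset.mem_univ, true_and] at hj
            have : j = i0 := by
              by_contra hne
              exact hj (by rw [hγ]; exact Pi.single_eq_of_ne hne 1)
            simp [this]
          calc (Finset.univ.filter (fun j => γ j ≠ 0)).card
              ≤ ({i0} : Finset (Fin p)).card := Finset.card_le_card hsub
            _ = 1 := Finset.card_singleton i0
            _ ≤ k := hk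
        · rw [hγ]
          simp [Pi.single_apply, apply_ite (· ^ (2:ℕ))]
      have := le_csSup (aux_bdd M k) hmem
      rw [hφ k]
      exact le_trans (aux_quad_nonneg hM _) this
    -- main bound for elements of the big set
    have hkey : ∀ x ∈ S ⌈ℓ * k⌉₊, x ≤ (m : ℝ) * φ k := by
      rintro x ⟨α, hcard, hnorm, rfl⟩
      set s : Finset (Fin p) := Finset.univ.filter (fun j => α j ≠ 0) with hsdef
      have hcard' : s.card ≤ m * k := by
        refine le_trans hcard ?_
        rw [Nat.ceil_le]
        push_cast
        exact mul_le_mul_of_nonneg_right (Nat.le_ceil ℓ) (by positivity)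
      obtain ⟨f, hfm, hffib⟩ := aux_partition s m k (by omega) hcard'
      set v : ℕ → Fin p → ℝ := fun t j => if f j = t ∧ j ∈ s then α j else 0 with hvdef
      have hαs : ∀ j, j ∉ s → α j = 0 := by
        intro j hj
        by_contra h
        exact hj (by simp [hsdef, h])
      -- (a) pointwise sum
      have hsum : ∀ j, ∑ t ∈ Finset.range m, v t j = α j := by
        intro j
        by_cases hj : j ∈ s
        · have hfj : f j ∈ Finset.range m := Finset.mem_range.mpr (hfm j hj)
          simp only [hvdef, hj, and_true]
          rw [Finset.sum_ite_eq (Finset.range m) (f j) (fun _ => α j)]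
          simp [hfj]
        · have h0 : α j = 0 := hαs j hj
          simp [hvdef, hj, h0]
      -- (b) sparsity of blocks
      have hsupp : ∀ t, (Finset.univ.filter (fun j => v t j ≠ 0)).card ≤ k := by
        intro t
        refine le_trans (Finset.card_le_card ?_) (hffib t)
        intro j hj
        simp only [Finset.mem_filter, Finset.mem_univ, true_and] at hj
        by_cases h : f j = t ∧ j ∈ s
        · exact Finset.mem_filter.mpr ⟨h.2, h.1⟩
        · simp [hvdef, h] at hj
      -- (c) total norm
      have htot : ∑ t ∈ Finset.range m, (∑ j, (v t j)^2) = 1 := by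
        rw [Finset.sum_comm, ← hnorm]
        refine Finset.sum_congr rfl fun j _ => ?_
        by_cases hj : j ∈ s
        · have hfj : f j ∈ Finset.range m := Finset.mem_range.mpr (hfm j hj)
          have heach : ∀ t, (v t j)^2 = if f j = t then (α j)^2 else 0 := by
            intro t
            simp only [hvdef, hj, and_true]
            split <;> simp
          rw [Finset.sum_congr rfl fun t _ => heach t,
            Finset.sum_ite_eq (Finset.range m) (f j) (fun _ => (α j)^2)]
          simp [hfj]
        · have h0 : α j = 0 := hαs j hj
          simp [hvdef, hj, h0]
      -- (d) block quadratic forms bounded by φ k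
      have hQt : ∀ t, v t ⬝ᵥ M.mulVec (v t) ≤ φ k * (∑ j, (v t j)^2) := by
        intro t
        have hc0 : 0 ≤ ∑ j, (v t j)^2 := Finset.sum_nonneg fun j _ => sq_nonneg _
        rcases eq_or_lt_of_le hc0 with hceq | hcpos
        · have hv0 : v t = 0 := by
            funext j
            have := (Finset.sum_eq_zero_iff_of_nonneg
              (fun j _ => sq_nonneg (v t j))).1 hceq.symm j (Finset.mem_univ j)
            exact sq_eq_zero_iff.mp this
          rw [← hceq, hv0]
          simp
        · set c : ℝ := ∑ j, (v t j)^2 with hcdef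
          have hsq : Real.sqrt c ≠ 0 := by positivity
          set β : Fin p → ℝ := (Real.sqrt c)⁻¹ • v t with hβdef
          have hβnorm : ∑ j, (β j)^2 = 1 := by
            simp only [hβdef, Pi.smul_apply, smul_eq_mul, mul_pow]
            rw [← Finset.mul_sum, ← hcdef, inv_pow, Real.sq_sqrt hc0]
            exact inv_mul_cancel₀ (ne_of_gt hcpos)
          have hβsupp : (Finset.univ.filter (fun j => β j ≠ 0)).card ≤ k := by
            refine le_trans (Finset.card_le_card ?_) (hsupp t)
            intro j hj
            simp only [Finset.mem_filter, Finset.mem_univ, true_and,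
              hβdef, Pi.smul_apply, smul_eq_mul] at hj ⊢
            intro h0
            exact hj (by rw [h0, mul_zero])
          have hβle : β ⬝ᵥ M.mulVec β ≤ φ k := by
            rw [hφ k]
            exact le_csSup (aux_bdd M k) ⟨β, hβsupp, hβnorm, rfl⟩
          have hvt : v t = Real.sqrt c • β := by
            rw [hβdef, smul_smul, mul_inv_cancel₀ hsq, one_smul]
          calc v t ⬝ᵥ M.mulVec (v t)
              = (Real.sqrt c • β) ⬝ᵥ M.mulVec (Real.sqrt c • β) := by rw [← hvt]
            _ = Real.sqrt c * (Real.sqrt c * (β ⬝ᵥ M.mulVec β)) := by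
                rw [smul_dotProduct, Matrix.mulVec_smul, dotProduct_smul]
                simp [smul_eq_mul]
            _ = c * (β ⬝ᵥ M.mulVec β) := by
                rw [← mul_assoc, Real.mul_self_sqrt hc0]
            _ ≤ c * φ k := mul_le_mul_of_nonneg_left hβle (le_of_lt hcpos)
            _ = φ k * c := mul_comm _ _
      -- (e) assemble
      have hα : α = ∑ t ∈ Finset.range m, v t := by
        funext j
        rw [Finset.sum_apply]
        exact (hsum j).symm
      set T : ℝ := ∑ t ∈ Finset.range m, (v t ⬝ᵥ M.mulVec (v t)) with hTdef
      have hdotl : ∀ y : Fin p → ℝ, (∑ t ∈ Finset.range m, v t) ⬝ᵥ y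
          = ∑ t ∈ Finset.range m, (v t ⬝ᵥ y) := by
        intro y
        simp only [dotProduct, Finset.sum_apply, Finset.sum_mul]
        rw [Finset.sum_comm]
      have hexpand : α ⬝ᵥ M.mulVec α
          = ∑ a ∈ Finset.range m, ∑ b ∈ Finset.range m, (v a ⬝ᵥ M.mulVec (v b)) := by
        rw [hα, hdotl]
        refine Finset.sum_congr rfl fun a _ => ?_
        have hmv : M.mulVec (∑ t ∈ Finset.range m, v t)
            = ∑ t ∈ Finset.range m, M.mulVec (v t) := by
          have h := map_sum M.mulVecLin v (Finset.range m)
          simp only [Matrix.mulVecLin_apply] at h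
          exact h
        rw [hmv]
        simp only [dotProduct, Finset.sum_apply, Finset.mul_sum]
        rw [Finset.sum_comm]
      have hstep : α ⬝ᵥ M.mulVec α ≤ (m : ℝ) * T := by
        rw [hexpand]
        calc ∑ a ∈ Finset.range m, ∑ b ∈ Finset.range m, (v a ⬝ᵥ M.mulVec (v b))
            ≤ ∑ a ∈ Finset.range m, ∑ b ∈ Finset.range m,
              ((v a ⬝ᵥ M.mulVec (v a) + v b ⬝ᵥ M.mulVec (v b)) / 2) :=
            Finset.sum_le_sum fun a _ => Finset.sum_le_sum fun b _ => by
              linarith [aux_twoB hM (v a) (v b)]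
          _ = (m : ℝ) * T := by
            have h1 : ∀ a ∈ Finset.range m,
                (∑ b ∈ Finset.range m, ((v a ⬝ᵥ M.mulVec (v a) + v b ⬝ᵥ M.mulVec (v b)) / 2))
                = ((m : ℝ) * (v a ⬝ᵥ M.mulVec (v a)) + T) / 2 := by
              intro a _
              rw [← Finset.sum_div, Finset.sum_add_distrib, Finset.sum_const,
                Finset.card_range, nsmul_eq_mul, hTdef]
            rw [Finset.sum_congr rfl h1, ← Finset.sum_div, Finset.sum_add_distrib,
              Finset.sum_const, Finset.card_range, nsmul_eq_mul, ← Finset.mul_sum, ← hTdef]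
            ring
      have hT : T ≤ φ k := by
        calc T ≤ ∑ t ∈ Finset.range m, φ k * (∑ j, (v t j)^2) :=
              Finset.sum_le_sum fun t _ => hQt t
          _ = φ k * ∑ t ∈ Finset.range m, ∑ j, (v t j)^2 := by rw [Finset.mul_sum]
          _ = φ k := by rw [htot, mul_one]
      calc α ⬝ᵥ M.mulVec α ≤ (m : ℝ) * T := hstep
        _ ≤ (m : ℝ) * φ k := mul_le_mul_of_nonneg_left hT (by positivity)
    rw [hφ]
    exact Real.sSup_le hkey (by positivity)
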